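/- Let k ≥ 2, let a_1, ..., a_k be integers and p_2, ..., p_k positive integers, and set ℓ_j = a_j + p_{j+1} + p_{j+2} + ... + p_k for 1 ≤ j ≤ k (so ℓ_k = a_k). Then the sum, over all (k−1)-tuples (i_2, ..., i_k) with 0 ≤ i_j ≤ p_j, of a_k · ∏_{j : i_j = 0} ℓ_j · ∏_{j : i_j = 1} (a_{j-1} − a_j + 1), equals ℓ_1 · ℓ_2 ··· ℓ_k. -/
import Mathlib

lemma aux_split {ι : Type*} (s : Finset ι) (g : ι → ℕ) (A B : ι → ℤ) :
    (∏ x ∈ s.filter (fun x => g x = 0), A x) * ∏ x ∈ s.filter (fun x => g x = 1), B x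
    = ∏ x ∈ s, (if g x = 0 then A x else if g x = 1 then B x else 1) := by
  rw [Finset.prod_ite]
  congr 1
  rw [Finset.prod_ite, Finset.filter_filter, Finset.filter_filter]
  have h1 : s.filter (fun x => ¬g x = 0 ∧ g x = 1) = s.filter (fun x => g x = 1) := by
    apply Finset.filter_congr; intro x _; constructor <;> intro h <;> omega
  rw [h1, Finset.prod_const_one, mul_one]

theorem stmt_5 (k : ℕ) (hk : 2 ≤ k) (a : ℕ → ℤ) (p : ℕ → ℕ)
    (hp : ∀ j, 2 ≤ j → j ≤ k → 1 ≤ p j)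
    (ℓ : ℕ → ℤ)
    (hℓ : ∀ j, ℓ j = a j + ∑ t ∈ Finset.Icc (j + 1) k, (p t : ℤ)) :
    (∑ i ∈ (Finset.Icc 2 k).pi (fun j => Finset.range (p j + 1)),
        a k * (∏ j ∈ (Finset.Icc 2 k).attach.filter (fun j => i j.1 j.2 = 0), ℓ j.1) *
          (∏ j ∈ (Finset.Icc 2 k).attach.filter (fun j => i j.1 j.2 = 1),
            (a (j.1 - 1) - a j.1 + 1))) =
      ∏ j ∈ Finset.Icc 1 k, ℓ j := by
  set f : ℕ → ℕ → ℤ := fun j v => if v = 0 then ℓ j else if v = 1 then a (j - 1) - a j + 1 else 1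
    with hf
  have step2 : ∀ j ∈ Finset.Icc 2 k, (∑ v ∈ Finset.range (p j + 1), f j v) = ℓ (j - 1) := by
    intro j hj
    rw [Finset.mem_Icc] at hj
    obtain ⟨m, hm⟩ : ∃ m, p j = m + 1 := ⟨p j - 1, by have := hp j hj.1 hj.2; omega⟩
    rw [hm]
    rw [Finset.sum_range_succ', Finset.sum_range_succ']
    simp only [hf]
    norm_num
    have hIcc : Finset.Icc (j - 1 + 1) k = insert j (Finset.Icc (j + 1) k) := by
      ext x
      simp only [Finset.mem_Icc, Finset.mem_insert]
      omega
    rw [hℓ (j - 1), hℓ j, hIcc, Finset.sum_insert (by simp)]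
    push_cast [hm]
    ring
  have step1 : (∑ i ∈ (Finset.Icc 2 k).pi (fun j => Finset.range (p j + 1)),
        a k * (∏ j ∈ (Finset.Icc 2 k).attach.filter (fun j => i j.1 j.2 = 0), ℓ j.1) *
          (∏ j ∈ (Finset.Icc 2 k).attach.filter (fun j => i j.1 j.2 = 1),
            (a (j.1 - 1) - a j.1 + 1)))
      = a k * ∏ j ∈ Finset.Icc 2 k, ∑ v ∈ Finset.range (p j + 1), f j v := by
    rw [Finset.prod_sum, Finset.mul_sum]
    apply Finset.sum_congr rfl
    intro i _
    rw [mul_assoc, aux_split]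
  rw [step1, Finset.prod_congr rfl step2]
  clear step1 step2
  obtain ⟨n, rfl⟩ : ∃ n, k = n + 2 := ⟨k - 2, by omega⟩
  have step3 : (∏ j ∈ Finset.Icc 2 (n + 2), ℓ (j - 1)) = ∏ j ∈ Finset.Icc 1 (n + 1), ℓ j := by
    apply Finset.prod_bij' (fun j _ => j - 1) (fun j _ => j + 1) <;>
      simp (config := {contextual := true}) [Finset.mem_Icc] <;> omega
  rw [step3]
  have hlast : ℓ (n + 2) = a (n + 2) := by
    rw [hℓ]; simp
  conv_rhs => rw [show Finset.Icc 1 (n + 2) = Finset.Icc 1 (n + 1 + 1) from rfl,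
    Finset.prod_Icc_succ_top (by omega : 1 ≤ n + 1 + 1)]
  rw [hlast]
  ring
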